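/- Let N be an l×l real matrix with N^k = 0. Then the (k+1)l × (k+1)l block bidiagonal matrix 𝒩 (with N on the diagonal blocks and I_l on the first subdiagonal blocks) is 1-full: every element (y₀,…,y_k) of ker 𝒩 satisfies y₀ = 0, and hence there is an invertible matrix T with T𝒩 = [[I_l, 0],[0, H]] for some H. -/

import Mathlib

/-- The `(k+1)l × (k+1)l` block bidiagonal matrix with `N` in every diagonal block
and the identity in every first subdiagonal block. -/
def arrayN (l k : ℕ) (N : Matrix (Fin l) (Fin l) ℝ) :
    Matrix (Fin (k + 1) × Fin l) (Fin (k + 1) × Fin l) ℝ :=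
  Matrix.of fun p q =>
    if p.1 = q.1 then N p.2 q.2
    else if (q.1 : ℕ) + 1 = (p.1 : ℕ) then (if p.2 = q.2 then 1 else 0) else 0

section Aux

variable (l k : ℕ) (N : Matrix (Fin l) (Fin l) ℝ)

/-- The block form of `arrayN`. -/
def blockN : Matrix (Fin (k + 1)) (Fin (k + 1)) (Matrix (Fin l) (Fin l) ℝ) :=
  fun i j => if i = j then N else if (j : ℕ) + 1 = (i : ℕ) then 1 else 0

/-- The block matrix `T`. -/
def Tblk : Matrix (Fin (k + 1)) (Fin (k + 1)) (Matrix (Fin l) (Fin l) ℝ) :=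
  fun i j =>
    if (i : ℕ) = 0 then (if (j : ℕ) = 0 then 0 else (-N) ^ ((j : ℕ) - 1))
    else if (i : ℕ) = 1 then
      (if (j : ℕ) = 0 then 1 else if (j : ℕ) = 1 then -N else 0)
    else if j = i then 1 else 0

/-- The inverse of the block matrix `T`. -/
def Sblk : Matrix (Fin (k + 1)) (Fin (k + 1)) (Matrix (Fin l) (Fin l) ℝ) :=
  fun i j =>
    if (i : ℕ) = 0 then
      (if (j : ℕ) = 0 then N else if (j : ℕ) = 1 then 1 else (-N) ^ (j : ℕ))
    else if (i : ℕ) = 1 then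
      (if (j : ℕ) = 0 then 1 else if (j : ℕ) = 1 then 0 else -(-N) ^ ((j : ℕ) - 1))
    else if j = i then 1 else 0

lemma arrayN_eq_comp :
    arrayN l k N = Matrix.compRingEquiv (Fin (k + 1)) (Fin l) ℝ (blockN l k N) := by
  ext ⟨i, p⟩ ⟨j, q⟩
  show _ = blockN l k N i j p q
  simp only [arrayN, blockN, Matrix.of_apply]
  by_cases h1 : i = j
  · simp [h1]
  · by_cases h2 : (j : ℕ) + 1 = (i : ℕ) <;>
      simp [h1, h2, Matrix.one_apply]

lemma Tblk_mul_Sblk (hk : 1 ≤ k) : Tblk l k N * Sblk l k N = 1 := by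
  refine Matrix.ext fun i j => ?_
  rw [Matrix.mul_apply, Matrix.one_apply]
  rcases Nat.lt_or_ge (i : ℕ) 2 with hi2 | hi2
  · interval_cases hi : (i : ℕ)
    · -- row 0
      rcases Nat.lt_or_ge (j : ℕ) 2 with hj2 | hj2
      · interval_cases hj : (j : ℕ)
        · -- (0,0)
          rw [if_pos (Fin.ext (by omega))]
          rw [Finset.sum_eq_single (⟨1, by omega⟩ : Fin (k + 1))]
          · simp [Tblk, Sblk, hi, hj]
          · intro c _ hc
            rcases eq_or_ne (c : ℕ) 0 with h0 | h0
            · simp [Tblk, hi, h0]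
            · have hc1 : (c : ℕ) ≠ 1 := fun h => hc (Fin.ext (by simp [h]))
              have hcj : ¬ ((j : ℕ) = (c : ℕ)) := by omega
              simp [Tblk, Sblk, hi, hj, h0, hc1]
              intro hj0
              exact absurd (congrArg Fin.val hj0) hcj
          · simp
        · -- (0,1)
          rw [if_neg (fun h => by have := congrArg Fin.val h; omega)]
          apply Finset.sum_eq_zero
          intro c _
          rcases eq_or_ne (c : ℕ) 0 with h0 | h0
          · simp [Tblk, hi, h0]
          · rcases eq_or_ne (c : ℕ) 1 with h1 | h1
            · simp [Tblk, Sblk, hi, hj, h0, h1]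
            · simp [Tblk, Sblk, hi, hj, h0, h1]
              intro hjc
              exact absurd (congrArg Fin.val hjc).symm (by omega)
      · -- (0, j) with j ≥ 2
        obtain ⟨m, hm⟩ : ∃ m, (j : ℕ) = m + 2 := ⟨(j : ℕ) - 2, by omega⟩
        rw [if_neg (fun h => by have := congrArg Fin.val h; omega)]
        rw [Finset.sum_eq_add_of_mem (⟨1, by omega⟩ : Fin (k + 1)) j
          (Finset.mem_univ _) (Finset.mem_univ _)
          (fun h => by have := congrArg Fin.val h; simp [hm] at this)]
        · have e1 : Tblk l k N i ⟨1, by omega⟩ = 1 := by simp [Tblk, hi]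
          have e2 : Sblk l k N ⟨1, by omega⟩ j = -(-N) ^ (m + 1) := by
            simp [Sblk, hm]
          have e3 : Tblk l k N i j = (-N) ^ (m + 1) := by simp [Tblk, hi, hm]
          have e4 : Sblk l k N j j = 1 := by simp [Sblk, hm]
          rw [e1, e2, e3, e4, one_mul, mul_one, neg_add_cancel]
        · intro c _ hc
          rcases eq_or_ne (c : ℕ) 0 with h0 | h0
          · simp [Tblk, hi, h0]
          · have h1 : (c : ℕ) ≠ 1 := fun h => hc.1 (Fin.ext (by simp [h]))
            have e5 : Sblk l k N c j = 0 := by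
              simp [Sblk, h0, h1]
              intro hjc
              exact absurd hjc.symm hc.2
            rw [e5, mul_zero]
    · -- row 1
      have habne : (⟨0, by omega⟩ : Fin (k + 1)) ≠ ⟨1, by omega⟩ := by
        intro h; have := congrArg Fin.val h; simp at this
      rcases Nat.lt_or_ge (j : ℕ) 2 with hj2 | hj2
      · interval_cases hj : (j : ℕ)
        · -- (1, 0)
          rw [if_neg (fun h => by have := congrArg Fin.val h; omega)]
          rw [Finset.sum_eq_add_of_mem (⟨0, by omega⟩ : Fin (k + 1)) (⟨1, by omega⟩ : Fin (k + 1))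
            (Finset.mem_univ _) (Finset.mem_univ _) habne]
          · have e1 : Tblk l k N i ⟨0, by omega⟩ = 1 := by simp [Tblk, hi]
            have e2 : Sblk l k N ⟨0, by omega⟩ j = N := by simp [Sblk, hj]
            have e3 : Tblk l k N i ⟨1, by omega⟩ = -N := by simp [Tblk, hi]
            have e4 : Sblk l k N ⟨1, by omega⟩ j = 1 := by simp [Sblk, hj]
            rw [e1, e2, e3, e4, one_mul, mul_one, add_neg_cancel]
          · intro c _ hc
            have h0 : (c : ℕ) ≠ 0 := fun h => hc.1 (Fin.ext (by simp [h]))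
            have h1 : (c : ℕ) ≠ 1 := fun h => hc.2 (Fin.ext (by simp [h]))
            simp [Tblk, hi, h0, h1]
        · -- (1, 1)
          rw [if_pos (Fin.ext (by omega))]
          rw [Finset.sum_eq_add_of_mem (⟨0, by omega⟩ : Fin (k + 1)) (⟨1, by omega⟩ : Fin (k + 1))
            (Finset.mem_univ _) (Finset.mem_univ _) habne]
          · have e1 : Tblk l k N i ⟨0, by omega⟩ = 1 := by simp [Tblk, hi]
            have e2 : Sblk l k N ⟨0, by omega⟩ j = 1 := by simp [Sblk, hj]
            have e4 : Sblk l k N ⟨1, by omega⟩ j = 0 := by simp [Sblk, hj]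
            rw [e1, e2, e4, one_mul, mul_zero, add_zero]
          · intro c _ hc
            have h0 : (c : ℕ) ≠ 0 := fun h => hc.1 (Fin.ext (by simp [h]))
            have h1 : (c : ℕ) ≠ 1 := fun h => hc.2 (Fin.ext (by simp [h]))
            simp [Tblk, hi, h0, h1]
      · -- (1, j) with j ≥ 2
        obtain ⟨m, hm⟩ : ∃ m, (j : ℕ) = m + 2 := ⟨(j : ℕ) - 2, by omega⟩
        rw [if_neg (fun h => by have := congrArg Fin.val h; omega)]
        rw [Finset.sum_eq_add_of_mem (⟨0, by omega⟩ : Fin (k + 1)) (⟨1, by omega⟩ : Fin (k + 1))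
          (Finset.mem_univ _) (Finset.mem_univ _) habne]
        · have e1 : Tblk l k N i ⟨0, by omega⟩ = 1 := by simp [Tblk, hi]
          have e2 : Sblk l k N ⟨0, by omega⟩ j = (-N) ^ (m + 2) := by simp [Sblk, hm]
          have e3 : Tblk l k N i ⟨1, by omega⟩ = -N := by simp [Tblk, hi]
          have e4 : Sblk l k N ⟨1, by omega⟩ j = -(-N) ^ (m + 1) := by simp [Sblk, hm]
          rw [e1, e2, e3, e4, one_mul, mul_neg, ← pow_succ']
          exact add_neg_cancel _
        · intro c _ hc
          have h0 : (c : ℕ) ≠ 0 := fun h => hc.1 (Fin.ext (by simp [h]))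
          have h1 : (c : ℕ) ≠ 1 := fun h => hc.2 (Fin.ext (by simp [h]))
          simp [Tblk, hi, h0, h1]
  · -- row i with i ≥ 2
    obtain ⟨m, hm⟩ : ∃ m, (i : ℕ) = m + 2 := ⟨(i : ℕ) - 2, by omega⟩
    rw [Finset.sum_eq_single i]
    · have e1 : Tblk l k N i i = 1 := by simp [Tblk, hm]
      have e2 : Sblk l k N i j = if j = i then 1 else 0 := by simp [Sblk, hm]
      rw [e1, e2, one_mul]
      by_cases h : i = j
      · simp [h]
      · rw [if_neg h, if_neg (fun hh => h hh.symm)]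
    · intro c _ hc
      have e1 : Tblk l k N i c = 0 := by
        simp [Tblk, hm]
        intro h
        exact absurd h hc
      rw [e1, zero_mul]
    · simp

end Aux

section Aux2

variable (l k : ℕ) (N : Matrix (Fin l) (Fin l) ℝ)

lemma TB_00 (hk : 1 ≤ k) :
    (Tblk l k N * blockN l k N) 0 0 = 1 := by
  rw [Matrix.mul_apply]
  rw [Finset.sum_eq_single (⟨1, by omega⟩ : Fin (k + 1))]
  · simp [Tblk, blockN]
  · intro c _ hc
    rcases eq_or_ne (c : ℕ) 0 with h0 | h0
    · simp [Tblk, h0]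
    · have h1 : (c : ℕ) ≠ 1 := fun h => hc (Fin.ext (by simp [h]))
      have e : blockN l k N c 0 = 0 := by
        simp only [blockN]
        rw [if_neg (fun h => h0 (by simp [h])),
          if_neg (by simp only [Fin.val_zero, zero_add]; exact fun hh => h1 hh.symm)]
      rw [e, mul_zero]
  · simp

lemma TB_0j (hk : 1 ≤ k) (hN : N ^ k = 0) (j : Fin (k + 1)) (hj : (j : ℕ) ≠ 0) :
    (Tblk l k N * blockN l k N) 0 j = 0 := by
  rw [Matrix.mul_apply]
  rcases Nat.lt_or_ge (j : ℕ) k with hjk | hjk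
  · -- j < k
    obtain ⟨m, hm⟩ : ∃ m, (j : ℕ) = m + 1 := ⟨(j : ℕ) - 1, by omega⟩
    rw [Finset.sum_eq_add_of_mem j (⟨(j : ℕ) + 1, by omega⟩ : Fin (k + 1))
      (Finset.mem_univ _) (Finset.mem_univ _)
      (fun h => by have := congrArg Fin.val h; simp at this)]
    · have e1 : Tblk l k N 0 j = (-N) ^ m := by simp [Tblk, hm]
      have e2 : blockN l k N j j = N := by simp [blockN]
      have e3 : Tblk l k N 0 ⟨(j : ℕ) + 1, by omega⟩ = (-N) ^ (m + 1) := by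
        simp [Tblk, hm]
      have e4 : blockN l k N ⟨(j : ℕ) + 1, by omega⟩ j = 1 := by
        have hne : ¬ ((⟨(j : ℕ) + 1, by omega⟩ : Fin (k + 1)) = j) := by
          intro h; exact absurd (congrArg Fin.val h) (by simp)
        simp [blockN, hne]
      rw [e1, e2, e3, e4, mul_one, pow_succ, mul_neg]
      exact add_neg_cancel _
    · intro c _ hc
      have e : blockN l k N c j = 0 := by
        have h1 : ¬ (c = j) := hc.1
        have h2 : ¬ ((j : ℕ) + 1 = (c : ℕ)) := by
          intro h
          exact hc.2 (Fin.ext (by simp [← h]))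
        simp [blockN, h1, h2]
      rw [e, mul_zero]
  · -- j = k
    have hjk' : (j : ℕ) = k := by omega
    obtain ⟨m, hm⟩ : ∃ m, k = m + 1 := ⟨k - 1, by omega⟩
    rw [Finset.sum_eq_single j]
    · have e1 : Tblk l k N 0 j = (-N) ^ m := by simp [Tblk, hjk', hm]
      have e2 : blockN l k N j j = N := by simp [blockN]
      rw [e1, e2, neg_pow, mul_assoc, ← pow_succ, ← hm, hN, mul_zero]
    · intro c _ hc
      have e : blockN l k N c j = 0 := by
        have h1 : ¬ (c = j) := hc
        have h2 : ¬ ((j : ℕ) + 1 = (c : ℕ)) := by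
          have : (c : ℕ) < k + 1 := c.isLt
          omega
        simp [blockN, h1, h2]
      rw [e, mul_zero]
    · simp

lemma TB_i0 (hk : 1 ≤ k) (i : Fin (k + 1)) (hi : (i : ℕ) ≠ 0) :
    (Tblk l k N * blockN l k N) i 0 = 0 := by
  rw [Matrix.mul_apply]
  rw [Finset.sum_eq_add_of_mem (⟨0, by omega⟩ : Fin (k + 1)) (⟨1, by omega⟩ : Fin (k + 1))
    (Finset.mem_univ _) (Finset.mem_univ _)
    (fun h => by have := congrArg Fin.val h; simp at this)]
  · have e2 : blockN l k N ⟨0, by omega⟩ 0 = N := by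
      simp [blockN]
    have e4 : blockN l k N ⟨1, by omega⟩ 0 = 1 := by
      have hne : ¬ ((⟨1, by omega⟩ : Fin (k + 1)) = 0) := by
        intro h; exact absurd (congrArg Fin.val h) (by simp)
      simp [blockN, hne]
    rcases eq_or_ne (i : ℕ) 1 with h1 | h1
    · have e1 : Tblk l k N i ⟨0, by omega⟩ = 1 := by simp [Tblk, hi, h1]
      have e3 : Tblk l k N i ⟨1, by omega⟩ = -N := by simp [Tblk, hi, h1]
      rw [e1, e2, e3, e4, one_mul, mul_one, add_neg_cancel]
    · obtain ⟨m, hm⟩ : ∃ m, (i : ℕ) = m + 2 := ⟨(i : ℕ) - 2, by omega⟩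
      have e1 : Tblk l k N i ⟨0, by omega⟩ = 0 := by
        simp only [Tblk]
        rw [if_neg (by omega), if_neg (by omega),
          if_neg (fun h => by have := congrArg Fin.val h; simp [hm] at this)]
      have e3 : Tblk l k N i ⟨1, by omega⟩ = 0 := by
        simp only [Tblk]
        rw [if_neg (by omega), if_neg (by omega),
          if_neg (fun h => by have := congrArg Fin.val h; simp [hm] at this)]
      rw [e1, e3, zero_mul, zero_mul, add_zero]
  · intro c _ hc
    have h0 : (c : ℕ) ≠ 0 := fun h => hc.1 (Fin.ext (by simp [h]))
    have h1 : (c : ℕ) ≠ 1 := fun h => hc.2 (Fin.ext (by simp [h]))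
    have e : blockN l k N c 0 = 0 := by
      simp only [blockN]
      rw [if_neg (fun h => h0 (by simp [h])),
        if_neg (by simp only [Fin.val_zero, zero_add]; exact fun hh => h1 hh.symm)]
    rw [e, mul_zero]

end Aux2

/-- If `N^k = 0` then the block bidiagonal array matrix `𝒩` is 1-full:
every kernel element has vanishing first block `y₀ = 0`, and there is an
invertible `T` such that `T 𝒩` has the block form `[[I_l, 0], [0, H]]`. -/
theorem stmt11 (l k : ℕ) (N : Matrix (Fin l) (Fin l) ℝ) (hN : N ^ k = 0) :
    (∀ y : Fin (k + 1) × Fin l → ℝ, (arrayN l k N).mulVec y = 0 →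
        ∀ p : Fin l, y (0, p) = 0) ∧
    ∃ T : Matrix (Fin (k + 1) × Fin l) (Fin (k + 1) × Fin l) ℝ, IsUnit T ∧
      (∀ p q : Fin l,
          (T * arrayN l k N) (0, p) (0, q) = if p = q then (1 : ℝ) else 0) ∧
      (∀ p : Fin l, ∀ jq : Fin (k + 1) × Fin l, jq.1 ≠ 0 →
          (T * arrayN l k N) (0, p) jq = 0) ∧
      (∀ ip : Fin (k + 1) × Fin l, ip.1 ≠ 0 → ∀ q : Fin l,
          (T * arrayN l k N) ip (0, q) = 0) := by
  constructor
  · -- kernel part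
    intro y hy p
    have row : ∀ (i : ℕ) (h1 : i + 1 < k + 1) (h0 : i < k + 1) (p : Fin l),
        (∑ q, N p q * y (⟨i + 1, h1⟩, q)) + y (⟨i, h0⟩, p) = 0 := by
      intro i h1 h0 p
      have hrow := congrFun hy (⟨i + 1, h1⟩, p)
      rw [Pi.zero_apply] at hrow
      simp only [Matrix.mulVec, dotProduct] at hrow
      rw [Fintype.sum_prod_type] at hrow
      rw [Finset.sum_eq_add_of_mem (⟨i + 1, h1⟩ : Fin (k + 1)) (⟨i, h0⟩ : Fin (k + 1))
        (Finset.mem_univ _) (Finset.mem_univ _)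
        (fun h => by have := congrArg Fin.val h; simp at this)] at hrow
      · have t1 : ∀ q : Fin l,
            arrayN l k N (⟨i + 1, h1⟩, p) ((⟨i + 1, h1⟩ : Fin (k + 1)), q) = N p q := by
          intro q; simp [arrayN]
        have t2 : ∀ q : Fin l,
            arrayN l k N (⟨i + 1, h1⟩, p) ((⟨i, h0⟩ : Fin (k + 1)), q)
              = if p = q then (1 : ℝ) else 0 := by
          intro q
          simp only [arrayN, Matrix.of_apply]
          rw [if_neg (fun h => by have := congrArg Fin.val h; simp at this), if_pos (by simp)]
        simp only [t1, t2] at hrow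
        have t3 : (∑ q, (if p = q then (1 : ℝ) else 0) * y ((⟨i, h0⟩ : Fin (k + 1)), q))
            = y (⟨i, h0⟩, p) := by
          simp [ite_mul]
        rw [t3] at hrow
        exact hrow
      · intro c _ hc
        apply Finset.sum_eq_zero
        intro q _
        have e : arrayN l k N (⟨i + 1, h1⟩, p) (c, q) = 0 := by
          simp only [arrayN, Matrix.of_apply]
          rw [if_neg (fun h => hc.1 h.symm),
            if_neg (fun h => hc.2 (Fin.ext (by simp at h ⊢; omega)))]
        rw [e, zero_mul]
    have key : ∀ i : ℕ, ∀ h : i < k + 1, ∀ p : Fin l,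
        y (0, p) = (-1 : ℝ) ^ i * (N ^ i).mulVec (fun q => y (⟨i, h⟩, q)) p := by
      intro i
      induction i with
      | zero =>
        intro h p
        simp [Matrix.one_mulVec]
      | succ n ih =>
        intro h p
        have hn : n < k + 1 := by omega
        rw [ih hn p]
        have hfun : (fun q => y ((⟨n, hn⟩ : Fin (k + 1)), q))
            = -((N.mulVec (fun q => y ((⟨n + 1, h⟩ : Fin (k + 1)), q)))) := by
          funext q
          have := row n h hn q
          have hmv : N.mulVec (fun q' => y ((⟨n + 1, h⟩ : Fin (k + 1)), q')) q
              = ∑ q', N q q' * y (⟨n + 1, h⟩, q') := by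
            simp [Matrix.mulVec, dotProduct]
          rw [Pi.neg_apply, hmv]
          linarith
        rw [hfun, Matrix.mulVec_neg, Matrix.mulVec_mulVec, ← pow_succ]
        rw [Pi.neg_apply]
        ring
    have := key k (by omega) p
    rw [hN] at this
    simpa [Matrix.zero_mulVec] using this
  · -- existence of T
    by_cases hk0 : k = 0
    · subst hk0
      have hl : l = 0 := by
        by_contra h
        have hpos : 0 < l := Nat.pos_of_ne_zero h
        have := congrFun (congrFun hN (⟨0, hpos⟩ : Fin l)) (⟨0, hpos⟩ : Fin l)
        simp [Matrix.one_apply] at this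
      subst hl
      exact ⟨1, isUnit_one, fun p q => p.elim0, fun p => p.elim0, fun ip _ q => q.elim0⟩
    · have hk : 1 ≤ k := by omega
      set E := Matrix.compRingEquiv (Fin (k + 1)) (Fin l) ℝ with hE
      have hprod : E (Tblk l k N) * arrayN l k N = E (Tblk l k N * blockN l k N) := by
        rw [arrayN_eq_comp, ← map_mul]
      refine ⟨E (Tblk l k N), ?_, ?_, ?_, ?_⟩
      · have h1 : E (Tblk l k N) * E (Sblk l k N) = 1 := by
          rw [← map_mul, Tblk_mul_Sblk l k N hk, map_one]
        exact ⟨⟨E (Tblk l k N), E (Sblk l k N), h1, mul_eq_one_comm.mp h1⟩, rfl⟩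
      · intro p q
        rw [hprod]
        have : E (Tblk l k N * blockN l k N) (0, p) (0, q)
            = (Tblk l k N * blockN l k N) 0 0 p q := rfl
        rw [this, TB_00 l k N hk, Matrix.one_apply]
      · intro p jq hjq
        rw [hprod]
        have : E (Tblk l k N * blockN l k N) (0, p) jq
            = (Tblk l k N * blockN l k N) 0 jq.1 p jq.2 := rfl
        rw [this, TB_0j l k N hk hN jq.1 (fun h => hjq (Fin.ext (by simpa using h)))]
        rfl
      · intro ip hip q
        rw [hprod]
        have : E (Tblk l k N * blockN l k N) ip (0, q)
            = (Tblk l k N * blockN l k N) ip.1 0 ip.2 q := rfl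
        rw [this, TB_i0 l k N hk ip.1 (fun h => hip (Fin.ext (by simpa using h)))]
        rfl
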